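/- With H_i = E_i/√(I_i) orthonormal for ⟨,⟩^I and K: so(3) → so(3) defined by ⟨K(u),v⟩^I = −⟨u, ½Σ_i(∇^I_{ad_v H_i}H_i + ∇^I_{H_i}(ad_v H_i))⟩^I for all v, one has K(u) = −(1/(2I_1I_2I_3)) ((I_2−I_3)² u_1 E_1 + (I_3−I_1)² u_2 E_2 + (I_1−I_2)² u_3 E_3). -/

import Mathlib

open Matrix

noncomputable section

/-- Basis element `E₁` of `so(3)`. -/
def E1 : Matrix (Fin 3) (Fin 3) ℝ := !![0,0,0; 0,0,-1; 0,1,0]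

/-- Basis element `E₂` of `so(3)`. -/
def E2 : Matrix (Fin 3) (Fin 3) ℝ := !![0,0,1; 0,0,0; -1,0,0]

/-- Basis element `E₃` of `so(3)`. -/
def E3 : Matrix (Fin 3) (Fin 3) ℝ := !![0,-1,0; 1,0,0; 0,0,0]

/-- The element of `so(3)` with hat coordinates `a = (a₁,a₂,a₃)`. -/
def ofHat (a : Fin 3 → ℝ) : Matrix (Fin 3) (Fin 3) ℝ := a 0 • E1 + a 1 • E2 + a 2 • E3

/-- Matrix commutator. -/
def bracket (X Y : Matrix (Fin 3) (Fin 3) ℝ) : Matrix (Fin 3) (Fin 3) ℝ := X * Y - Y * X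

/-- Hat coordinates of a skew-symmetric matrix. -/
def hat (v : Matrix (Fin 3) (Fin 3) ℝ) : Fin 3 → ℝ := ![v 2 1, v 0 2, v 1 0]

/-- The weighted inner product `⟨v,w⟩^I = Σ_j I_j v_j w_j` on `so(3)` in hat coordinates. -/
def innerI (I : Fin 3 → ℝ) (v w : Matrix (Fin 3) (Fin 3) ℝ) : ℝ :=
  ∑ j, I j * hat v j * hat w j

/-- The orthonormal basis `H_i = E_i / √(I_i)` of `(so(3), ⟨,⟩^I)`. -/
def Hb (I : Fin 3 → ℝ) (i : Fin 3) : Matrix (Fin 3) (Fin 3) ℝ :=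
  (Real.sqrt (I i))⁻¹ • (![E1, E2, E3] i)


def cross (a b : Fin 3 → ℝ) : Fin 3 → ℝ :=
  ![a 1 * b 2 - a 2 * b 1, a 2 * b 0 - a 0 * b 2, a 0 * b 1 - a 1 * b 0]

lemma hat_ofHat (a : Fin 3 → ℝ) : hat (ofHat a) = a := by
  funext j; fin_cases j <;> simp [hat, ofHat, E1, E2, E3, Matrix.vecHead, Matrix.vecTail]

lemma innerI_ofHat (I a b : Fin 3 → ℝ) :
    innerI I (ofHat a) (ofHat b) = I 0 * a 0 * b 0 + I 1 * a 1 * b 1 + I 2 * a 2 * b 2 := by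
  simp [innerI, hat_ofHat, Fin.sum_univ_three]

lemma ofHat_eq (a : Fin 3 → ℝ) :
    ofHat a = !![0, -a 2, a 1; a 2, 0, -a 0; -a 1, a 0, 0] := by
  ext i j
  fin_cases i <;> fin_cases j <;>
    simp [ofHat, E1, E2, E3, Matrix.vecHead, Matrix.vecTail]

lemma bracket_ofHat (a b : Fin 3 → ℝ) : bracket (ofHat a) (ofHat b) = ofHat (cross a b) := by
  rw [ofHat_eq a, ofHat_eq b, ofHat_eq (cross a b), bracket, Matrix.mul_fin_three,
    Matrix.mul_fin_three]
  simp [cross]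
  refine ⟨⟨?_, ?_, ?_⟩, ⟨?_, ?_, ?_⟩, ?_, ?_, ?_⟩ <;> ring

lemma hat_add (A B : Matrix (Fin 3) (Fin 3) ℝ) : hat (A + B) = hat A + hat B := by
  funext j; fin_cases j <;> simp [hat]

lemma hat_smul (r : ℝ) (A : Matrix (Fin 3) (Fin 3) ℝ) : hat (r • A) = r • hat A := by
  funext j; fin_cases j <;> simp [hat]

lemma innerI_add_right (I : Fin 3 → ℝ) (v A B) :
    innerI I v (A + B) = innerI I v A + innerI I v B := by
  simp [innerI, hat_add, mul_add, Finset.sum_add_distrib]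

lemma innerI_smul_right (I : Fin 3 → ℝ) (v) (r : ℝ) (A) :
    innerI I v (r • A) = r * innerI I v A := by
  simp [innerI, hat_smul, Finset.mul_sum]; apply Finset.sum_congr rfl; intros; ring

lemma innerI_symm (I : Fin 3 → ℝ) (v w) : innerI I v w = innerI I w v := by
  unfold innerI; apply Finset.sum_congr rfl; intros; ring

lemma Hb0 (I : Fin 3 → ℝ) : Hb I 0 = ofHat ![(Real.sqrt (I 0))⁻¹, 0, 0] := by
  simp [Hb, ofHat]
lemma Hb1 (I : Fin 3 → ℝ) : Hb I 1 = ofHat ![0, (Real.sqrt (I 1))⁻¹, 0] := by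
  simp [Hb, ofHat]
lemma Hb2 (I : Fin 3 → ℝ) : Hb I 2 = ofHat ![0, 0, (Real.sqrt (I 2))⁻¹] := by
  simp [Hb, ofHat]

set_option maxHeartbeats 1000000 in
/-- With `H_i = E_i/√(I_i)` orthonormal for `⟨,⟩^I` and `K` defined by
`⟨K(u),v⟩^I = −⟨u, ½Σᵢ(∇^I_{ad_v H_i}H_i + ∇^I_{H_i}(ad_v H_i))⟩^I`,
one has `K(u) = −(1/(2I₁I₂I₃)) ((I₂−I₃)² u₁ E₁ + (I₃−I₁)² u₂ E₂ + (I₁−I₂)² u₃ E₃)`. -/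
theorem so3_K_formula (I : Fin 3 → ℝ) (hI : ∀ j, 0 < I j)
    (N : Matrix (Fin 3) (Fin 3) ℝ → Matrix (Fin 3) (Fin 3) ℝ → Matrix (Fin 3) (Fin 3) ℝ)
    (hrange : ∀ a b : Fin 3 → ℝ, ∃ d : Fin 3 → ℝ, N (ofHat a) (ofHat b) = ofHat d)
    (hKoszul : ∀ a b c : Fin 3 → ℝ,
      2 * innerI I (N (ofHat a) (ofHat b)) (ofHat c) =
        innerI I (bracket (ofHat a) (ofHat b)) (ofHat c)
          - innerI I (bracket (ofHat b) (ofHat c)) (ofHat a)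
          + innerI I (bracket (ofHat c) (ofHat a)) (ofHat b))
    (u k : Fin 3 → ℝ)
    (hk : ∀ v : Fin 3 → ℝ,
      innerI I (ofHat k) (ofHat v) =
        - innerI I (ofHat u)
          ((1/2 : ℝ) • ∑ i : Fin 3, (N (bracket (ofHat v) (Hb I i)) (Hb I i)
            + N (Hb I i) (bracket (ofHat v) (Hb I i))))) :
    ofHat k = (-(1 / (2 * (I 0 * I 1 * I 2)))) •
      (((I 1 - I 2) ^ 2 * u 0) • E1 + ((I 2 - I 0) ^ 2 * u 1) • E2 +
        ((I 0 - I 1) ^ 2 * u 2) • E3) := by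
  have key : ∀ a b : Fin 3 → ℝ, innerI I (ofHat u) (N (ofHat a) (ofHat b)) =
      (innerI I (ofHat (cross a b)) (ofHat u) - innerI I (ofHat (cross b u)) (ofHat a)
        + innerI I (ofHat (cross u a)) (ofHat b)) / 2 := by
    intro a b
    rw [innerI_symm]
    have h := hKoszul a b u
    rw [bracket_ofHat, bracket_ofHat, bracket_ofHat] at h
    linarith
  have h0 := hk ![1,0,0]
  simp only [Fin.sum_univ_three, Hb0, Hb1, Hb2, bracket_ofHat, innerI_smul_right,
    innerI_add_right, key, innerI_ofHat, cross, Matrix.cons_val_zero, Matrix.cons_val_one,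
    Matrix.head_cons, Matrix.cons_val_two, Matrix.tail_cons] at h0
  ring_nf at h0
  simp only [inv_pow, Real.sq_sqrt (hI 0).le, Real.sq_sqrt (hI 1).le,
    Real.sq_sqrt (hI 2).le] at h0
  have hI0 := (hI 0).ne'
  have hI1 := (hI 1).ne'
  have hI2 := (hI 2).ne'
  have hk0 : k 0 = -(1 / (2 * (I 0 * I 1 * I 2))) * ((I 1 - I 2) ^ 2 * u 0) := by
    field_simp at h0 ⊢
    linear_combination h0
  have h1 := hk ![0,1,0]
  simp only [Fin.sum_univ_three, Hb0, Hb1, Hb2, bracket_ofHat, innerI_smul_right,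
    innerI_add_right, key, innerI_ofHat, cross, Matrix.cons_val_zero, Matrix.cons_val_one,
    Matrix.head_cons, Matrix.cons_val_two, Matrix.tail_cons] at h1
  ring_nf at h1
  simp only [inv_pow, Real.sq_sqrt (hI 0).le, Real.sq_sqrt (hI 1).le,
    Real.sq_sqrt (hI 2).le] at h1
  have hk1 : k 1 = -(1 / (2 * (I 0 * I 1 * I 2))) * ((I 2 - I 0) ^ 2 * u 1) := by
    field_simp at h1 ⊢
    linear_combination h1
  have h2 := hk ![0,0,1]
  simp only [Fin.sum_univ_three, Hb0, Hb1, Hb2, bracket_ofHat, innerI_smul_right,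
    innerI_add_right, key, innerI_ofHat, cross, Matrix.cons_val_zero, Matrix.cons_val_one,
    Matrix.head_cons, Matrix.cons_val_two, Matrix.tail_cons] at h2
  ring_nf at h2
  simp only [inv_pow, Real.sq_sqrt (hI 0).le, Real.sq_sqrt (hI 1).le,
    Real.sq_sqrt (hI 2).le] at h2
  have hk2 : k 2 = -(1 / (2 * (I 0 * I 1 * I 2))) * ((I 0 - I 1) ^ 2 * u 2) := by
    field_simp at h2 ⊢
    linear_combination h2
  rw [ofHat_eq k]
  ext i j
  fin_cases i <;> fin_cases j <;>
    simp [E1, E2, E3, Matrix.vecHead, Matrix.vecTail, hk0, hk1, hk2] <;> ring
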